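/- Consider the vector fields on ℝ⁴ (coordinates t, x, φ, ψ) given by X₁ = ∂_t, X₂ = ∂_x, X₃ = ∂_φ, X₄ = t∂_φ, X₅ = x∂_φ − ∂_ψ, X₆ = tx∂_φ + (2√(ρ₂/k) − t)∂_ψ, X₇ = e^{−√(k/ρ₂)t}∂_ψ, X₈ = t e^{−√(k/ρ₂)t}∂_ψ. Then [X₁,X₄] = X₃, [X₁,X₆] = X₅, [X₁,X₇] = −√(k/ρ₂) X₇, [X₁,X₈] = X₇ − √(k/ρ₂) X₈, [X₂,X₅] = X₃, [X₂,X₆] = X₄, and all other commutators [Xᵢ,Xⱼ] with i < j vanish. In particular, the span of X₁,…,X₈ is a Lie subalgebra of vector fields on ℝ⁴. -/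

import Mathlib

/-- The Lie bracket of vector fields on ℝ⁴ (identified with smooth maps ℝ⁴ → ℝ⁴):
`[V,W] = (DW)V − (DV)W`. -/
noncomputable def vfBracket (V W : (Fin 4 → ℝ) → Fin 4 → ℝ) : (Fin 4 → ℝ) → Fin 4 → ℝ :=
  fun p => fderiv ℝ W p (V p) - fderiv ℝ V p (W p)

namespace TimoAux

noncomputable def P (i : Fin 4) : (Fin 4 → ℝ) →L[ℝ] ℝ := ContinuousLinearMap.proj i

@[simp] lemma P_apply (i : Fin 4) (v : Fin 4 → ℝ) : P i v = v i := rfl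

lemma hasFDerivAt_vf (f g : (Fin 4 → ℝ) → ℝ) (f' g' : (Fin 4 → ℝ) →L[ℝ] ℝ) (p : Fin 4 → ℝ)
    (hf : HasFDerivAt f f' p) (hg : HasFDerivAt g g' p) :
    HasFDerivAt (fun q => ![(0:ℝ), 0, f q, g q]) (ContinuousLinearMap.pi ![0, 0, f', g']) p := by
  rw [hasFDerivAt_pi']
  intro i
  fin_cases i <;> rw [ContinuousLinearMap.proj_pi] <;> simp only [Matrix.cons_val_zero,
    Matrix.cons_val_one, Matrix.head_cons, Matrix.cons_val_two, Matrix.tail_cons,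
    Matrix.cons_val_three]
  · exact hasFDerivAt_const _ _
  · exact hasFDerivAt_const _ _
  · exact hf
  · exact hg

lemma hbr (V W : (Fin 4 → ℝ) → Fin 4 → ℝ)
    (LV LW : (Fin 4 → ℝ) → ((Fin 4 → ℝ) →L[ℝ] (Fin 4 → ℝ)))
    (hV : ∀ p, HasFDerivAt V (LV p) p) (hW : ∀ p, HasFDerivAt W (LW p) p) :
    vfBracket V W = fun p => LW p (V p) - LV p (W p) := by
  funext p
  simp only [vfBracket, (hV p).fderiv, (hW p).fderiv]

lemma hzero (V W : (Fin 4 → ℝ) → Fin 4 → ℝ)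
    (LV LW : (Fin 4 → ℝ) → ((Fin 4 → ℝ) →L[ℝ] (Fin 4 → ℝ)))
    (hV : ∀ p, HasFDerivAt V (LV p) p) (hW : ∀ p, HasFDerivAt W (LW p) p)
    (h1 : ∀ p, LW p (V p) = 0) (h2 : ∀ p, LV p (W p) = 0) :
    vfBracket V W = 0 := by
  rw [hbr V W LV LW hV hW]
  funext p
  simp [h1 p, h2 p]

lemma anti (V W : (Fin 4 → ℝ) → Fin 4 → ℝ) : vfBracket W V = -vfBracket V W := by
  funext p
  simp [vfBracket, neg_sub]

end TimoAux

set_option maxHeartbeats 4000000 in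
open TimoAux in
theorem timoshenko_symmetry_vector_fields_commutators
    (ρ₂ k : ℝ) (hρ₂ : 0 < ρ₂) (hk : 0 < k)
    (X : Fin 8 → (Fin 4 → ℝ) → Fin 4 → ℝ)
    (hX1 : X 0 = fun _ => ![1, 0, 0, 0])
    (hX2 : X 1 = fun _ => ![0, 1, 0, 0])
    (hX3 : X 2 = fun _ => ![0, 0, 1, 0])
    (hX4 : X 3 = fun p => ![0, 0, p 0, 0])
    (hX5 : X 4 = fun p => ![0, 0, p 1, -1])
    (hX6 : X 5 = fun p => ![0, 0, p 0 * p 1, 2 * Real.sqrt (ρ₂ / k) - p 0])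
    (hX7 : X 6 = fun p => ![0, 0, 0, Real.exp (-Real.sqrt (k / ρ₂) * p 0)])
    (hX8 : X 7 = fun p => ![0, 0, 0, p 0 * Real.exp (-Real.sqrt (k / ρ₂) * p 0)]) :
    vfBracket (X 0) (X 3) = X 2 ∧
    vfBracket (X 0) (X 5) = X 4 ∧
    vfBracket (X 0) (X 6) = (-Real.sqrt (k / ρ₂)) • X 6 ∧
    vfBracket (X 0) (X 7) = X 6 - Real.sqrt (k / ρ₂) • X 7 ∧
    vfBracket (X 1) (X 4) = X 2 ∧
    vfBracket (X 1) (X 5) = X 3 ∧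
    (∀ i j : Fin 8, i < j →
      (i, j) ∉ ({(0, 3), (0, 5), (0, 6), (0, 7), (1, 4), (1, 5)} : Set (Fin 8 × Fin 8)) →
      vfBracket (X i) (X j) = 0) ∧
    (∀ i j : Fin 8, vfBracket (X i) (X j) ∈ Submodule.span ℝ (Set.range X)) := by
  set c := Real.sqrt (k / ρ₂) with hc
  -- projections derivatives
  have hp0 : ∀ p : Fin 4 → ℝ, HasFDerivAt (fun q : Fin 4 → ℝ => q 0) (P 0) p :=
    fun p => by exact (P 0).hasFDerivAt (x := p)
  have hp1 : ∀ p : Fin 4 → ℝ, HasFDerivAt (fun q : Fin 4 → ℝ => q 1) (P 1) p :=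
    fun p => by exact (P 1).hasFDerivAt (x := p)
  have hexp : ∀ p : Fin 4 → ℝ,
      HasFDerivAt (fun q : Fin 4 → ℝ => Real.exp (-c * q 0))
        (Real.exp (-c * p 0) • ((-c) • P 0)) p :=
    fun p => ((hp0 p).const_mul (-c)).exp
  -- derivatives of the fields
  have hd0 : ∀ p, HasFDerivAt (X 0) ((fun _ => 0) p : (Fin 4 → ℝ) →L[ℝ] (Fin 4 → ℝ)) p := by
    rw [hX1]; exact fun p => hasFDerivAt_const _ _
  have hd1 : ∀ p, HasFDerivAt (X 1) ((fun _ => 0) p : (Fin 4 → ℝ) →L[ℝ] (Fin 4 → ℝ)) p := by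
    rw [hX2]; exact fun p => hasFDerivAt_const _ _
  have hd2 : ∀ p, HasFDerivAt (X 2) ((fun _ => 0) p : (Fin 4 → ℝ) →L[ℝ] (Fin 4 → ℝ)) p := by
    rw [hX3]; exact fun p => hasFDerivAt_const _ _
  have hd3 : ∀ p, HasFDerivAt (X 3)
      ((fun _ => ContinuousLinearMap.pi ![0, 0, P 0, 0]) p) p := by
    rw [hX4]
    exact fun p => hasFDerivAt_vf _ _ _ _ p (hp0 p) (hasFDerivAt_const _ _)
  have hd4 : ∀ p, HasFDerivAt (X 4)
      ((fun _ => ContinuousLinearMap.pi ![0, 0, P 1, 0]) p) p := by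
    rw [hX5]
    exact fun p => hasFDerivAt_vf _ _ _ _ p (hp1 p) (hasFDerivAt_const _ _)
  have hd5 : ∀ p, HasFDerivAt (X 5)
      ((fun p : Fin 4 → ℝ =>
        ContinuousLinearMap.pi ![0, 0, p 0 • P 1 + p 1 • P 0, -P 0]) p) p := by
    rw [hX6]
    exact fun p => hasFDerivAt_vf _ _ _ _ p ((hp0 p).mul (hp1 p))
      ((hp0 p).const_sub _)
  have hd6 : ∀ p, HasFDerivAt (X 6)
      ((fun p : Fin 4 → ℝ =>
        ContinuousLinearMap.pi ![0, 0, 0, Real.exp (-c * p 0) • ((-c) • P 0)]) p) p := by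
    rw [hX7]
    exact fun p => hasFDerivAt_vf _ _ _ _ p (hasFDerivAt_const _ _) (hexp p)
  have hd7 : ∀ p, HasFDerivAt (X 7)
      ((fun p : Fin 4 → ℝ =>
        ContinuousLinearMap.pi ![0, 0, 0,
          p 0 • (Real.exp (-c * p 0) • ((-c) • P 0)) + Real.exp (-c * p 0) • P 0]) p) p := by
    rw [hX8]
    exact fun p => hasFDerivAt_vf _ _ _ _ p (hasFDerivAt_const _ _) ((hp0 p).mul (hexp p))
  -- the six nonzero brackets
  have h03 : vfBracket (X 0) (X 3) = X 2 := by
    rw [hbr _ _ _ _ hd0 hd3, hX1, hX3]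
    funext p i
    fin_cases i <;> simp
  have h05 : vfBracket (X 0) (X 5) = X 4 := by
    rw [hbr _ _ _ _ hd0 hd5, hX1, hX5]
    funext p i
    fin_cases i <;> simp
  have h06 : vfBracket (X 0) (X 6) = (-c) • X 6 := by
    rw [hbr _ _ _ _ hd0 hd6, hX1, hX7]
    funext p i
    fin_cases i <;> simp <;> ring
  have h07 : vfBracket (X 0) (X 7) = X 6 - c • X 7 := by
    rw [hbr _ _ _ _ hd0 hd7, hX1, hX7, hX8]
    funext p i
    fin_cases i <;> simp <;> ring
  have h14 : vfBracket (X 1) (X 4) = X 2 := by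
    rw [hbr _ _ _ _ hd1 hd4, hX2, hX3]
    funext p i
    fin_cases i <;> simp
  have h15 : vfBracket (X 1) (X 5) = X 3 := by
    rw [hbr _ _ _ _ hd1 hd5, hX2, hX4]
    funext p i
    fin_cases i <;> simp
  have h01 : vfBracket (X 0) (X 1) = 0 :=
    hzero _ _ _ _ hd0 hd1
      (by intro p; rw [hX1]; funext i; fin_cases i <;> simp)
      (by intro p; rw [hX2]; funext i; fin_cases i <;> simp)
  have h02 : vfBracket (X 0) (X 2) = 0 :=
    hzero _ _ _ _ hd0 hd2
      (by intro p; rw [hX1]; funext i; fin_cases i <;> simp)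
      (by intro p; rw [hX3]; funext i; fin_cases i <;> simp)
  have h04 : vfBracket (X 0) (X 4) = 0 :=
    hzero _ _ _ _ hd0 hd4
      (by intro p; rw [hX1]; funext i; fin_cases i <;> simp)
      (by intro p; rw [hX5]; funext i; fin_cases i <;> simp)
  have h12 : vfBracket (X 1) (X 2) = 0 :=
    hzero _ _ _ _ hd1 hd2
      (by intro p; rw [hX2]; funext i; fin_cases i <;> simp)
      (by intro p; rw [hX3]; funext i; fin_cases i <;> simp)
  have h13 : vfBracket (X 1) (X 3) = 0 :=
    hzero _ _ _ _ hd1 hd3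
      (by intro p; rw [hX2]; funext i; fin_cases i <;> simp)
      (by intro p; rw [hX4]; funext i; fin_cases i <;> simp)
  have h16 : vfBracket (X 1) (X 6) = 0 :=
    hzero _ _ _ _ hd1 hd6
      (by intro p; rw [hX2]; funext i; fin_cases i <;> simp)
      (by intro p; rw [hX7]; funext i; fin_cases i <;> simp)
  have h17 : vfBracket (X 1) (X 7) = 0 :=
    hzero _ _ _ _ hd1 hd7
      (by intro p; rw [hX2]; funext i; fin_cases i <;> simp)
      (by intro p; rw [hX8]; funext i; fin_cases i <;> simp)
  have h23 : vfBracket (X 2) (X 3) = 0 :=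
    hzero _ _ _ _ hd2 hd3
      (by intro p; rw [hX3]; funext i; fin_cases i <;> simp)
      (by intro p; rw [hX4]; funext i; fin_cases i <;> simp)
  have h24 : vfBracket (X 2) (X 4) = 0 :=
    hzero _ _ _ _ hd2 hd4
      (by intro p; rw [hX3]; funext i; fin_cases i <;> simp)
      (by intro p; rw [hX5]; funext i; fin_cases i <;> simp)
  have h25 : vfBracket (X 2) (X 5) = 0 :=
    hzero _ _ _ _ hd2 hd5
      (by intro p; rw [hX3]; funext i; fin_cases i <;> simp)
      (by intro p; rw [hX6]; funext i; fin_cases i <;> simp)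
  have h26 : vfBracket (X 2) (X 6) = 0 :=
    hzero _ _ _ _ hd2 hd6
      (by intro p; rw [hX3]; funext i; fin_cases i <;> simp)
      (by intro p; rw [hX7]; funext i; fin_cases i <;> simp)
  have h27 : vfBracket (X 2) (X 7) = 0 :=
    hzero _ _ _ _ hd2 hd7
      (by intro p; rw [hX3]; funext i; fin_cases i <;> simp)
      (by intro p; rw [hX8]; funext i; fin_cases i <;> simp)
  have h34 : vfBracket (X 3) (X 4) = 0 :=
    hzero _ _ _ _ hd3 hd4
      (by intro p; rw [hX4]; funext i; fin_cases i <;> simp)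
      (by intro p; rw [hX5]; funext i; fin_cases i <;> simp)
  have h35 : vfBracket (X 3) (X 5) = 0 :=
    hzero _ _ _ _ hd3 hd5
      (by intro p; rw [hX4]; funext i; fin_cases i <;> simp)
      (by intro p; rw [hX6]; funext i; fin_cases i <;> simp)
  have h36 : vfBracket (X 3) (X 6) = 0 :=
    hzero _ _ _ _ hd3 hd6
      (by intro p; rw [hX4]; funext i; fin_cases i <;> simp)
      (by intro p; rw [hX7]; funext i; fin_cases i <;> simp)
  have h37 : vfBracket (X 3) (X 7) = 0 :=
    hzero _ _ _ _ hd3 hd7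
      (by intro p; rw [hX4]; funext i; fin_cases i <;> simp)
      (by intro p; rw [hX8]; funext i; fin_cases i <;> simp)
  have h45 : vfBracket (X 4) (X 5) = 0 :=
    hzero _ _ _ _ hd4 hd5
      (by intro p; rw [hX5]; funext i; fin_cases i <;> simp)
      (by intro p; rw [hX6]; funext i; fin_cases i <;> simp)
  have h46 : vfBracket (X 4) (X 6) = 0 :=
    hzero _ _ _ _ hd4 hd6
      (by intro p; rw [hX5]; funext i; fin_cases i <;> simp)
      (by intro p; rw [hX7]; funext i; fin_cases i <;> simp)
  have h47 : vfBracket (X 4) (X 7) = 0 :=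
    hzero _ _ _ _ hd4 hd7
      (by intro p; rw [hX5]; funext i; fin_cases i <;> simp)
      (by intro p; rw [hX8]; funext i; fin_cases i <;> simp)
  have h56 : vfBracket (X 5) (X 6) = 0 :=
    hzero _ _ _ _ hd5 hd6
      (by intro p; rw [hX6]; funext i; fin_cases i <;> simp)
      (by intro p; rw [hX7]; funext i; fin_cases i <;> simp)
  have h57 : vfBracket (X 5) (X 7) = 0 :=
    hzero _ _ _ _ hd5 hd7
      (by intro p; rw [hX6]; funext i; fin_cases i <;> simp)
      (by intro p; rw [hX8]; funext i; fin_cases i <;> simp)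
  have h67 : vfBracket (X 6) (X 7) = 0 :=
    hzero _ _ _ _ hd6 hd7
      (by intro p; rw [hX7]; funext i; fin_cases i <;> simp)
      (by intro p; rw [hX8]; funext i; fin_cases i <;> simp)
  have hvv : ∀ a : Fin 8, vfBracket (X a) (X a) = 0 := by
    intro a; funext p; simp [vfBracket]
  have hz : ∀ i j : Fin 8, i < j →
      (i, j) ∉ ({(0, 3), (0, 5), (0, 6), (0, 7), (1, 4), (1, 5)} : Set (Fin 8 × Fin 8)) →
      vfBracket (X i) (X j) = 0 := by
    intro i j hlt hmem
    fin_cases i <;> fin_cases j <;>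
      first
        | (exfalso; revert hlt; decide)
        | (refine absurd ?_ hmem; simp; done)
        | exact h01 | exact h02 | exact h04 | exact h12 | exact h13 | exact h16 | exact h17 | exact h23 | exact h24 | exact h25 | exact h26 | exact h27 | exact h34 | exact h35 | exact h36 | exact h37 | exact h45 | exact h46 | exact h47 | exact h56 | exact h57 | exact h67
  refine ⟨h03, h05, h06, h07, h14, h15, hz, ?_⟩
  have hs : ∀ a : Fin 8, X a ∈ Submodule.span ℝ (Set.range X) :=
    fun a => Submodule.subset_span ⟨a, rfl⟩
  have key : ∀ a b : Fin 8, a < b →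
      vfBracket (X a) (X b) ∈ Submodule.span ℝ (Set.range X) := by
    intro a b hab
    by_cases hm : (a, b) ∈
        ({(0, 3), (0, 5), (0, 6), (0, 7), (1, 4), (1, 5)} : Set (Fin 8 × Fin 8))
    · simp only [Set.mem_insert_iff, Set.mem_singleton_iff, Prod.mk.injEq] at hm
      rcases hm with ⟨ha, hb⟩ | ⟨ha, hb⟩ | ⟨ha, hb⟩ | ⟨ha, hb⟩ | ⟨ha, hb⟩ | ⟨ha, hb⟩ <;>
        subst ha <;> subst hb
      · rw [h03]; exact hs 2
      · rw [h05]; exact hs 4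
      · rw [h06]; exact Submodule.smul_mem _ _ (hs 6)
      · rw [h07]; exact Submodule.sub_mem _ (hs 6) (Submodule.smul_mem _ _ (hs 7))
      · rw [h14]; exact hs 2
      · rw [h15]; exact hs 3
    · rw [hz a b hab hm]; exact Submodule.zero_mem _
  intro i j
  rcases lt_trichotomy i j with h | h | h
  · exact key i j h
  · subst h; rw [hvv]; exact Submodule.zero_mem _
  · rw [anti]; exact Submodule.neg_mem _ (key j i h)
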